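/- For every strategy σ ∈ Σ^Opt and every finite path ρ with P_{σ,s₀}(ρ) > 0 (where s₀ is the first state of ρ), Pr_{σ_ρ, last(ρ)}(□¬Bad) = 1 if and only if last(ρ) ∈ Good. -/

import Mathlib

open scoped ENNReal NNReal Classical
open Filter

universe u v

variable {S : Type u} {A : Type v}

/-- A finite MDP: `P s a = some d` means action `a` is legal at `s` and `d` is a
probability distribution on `S`; every state has at least one legal action. -/
structure MDP (S : Type u) (A : Type v) [Fintype S] [Fintype A] where
  P : S → A → Option (S → NNReal)
  sum_one : ∀ s a d, P s a = some d → (∑ s', d s') = 1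
  exists_legal : ∀ s, ∃ a, (P s a).isSome

/-- Last state of an alternating path starting at `s` with steps `steps`. -/
def lastState : S → List (A × S) → S
  | s, [] => s
  | _, (_, s') :: rest => lastState s' rest

/-- A finite path: a start state together with a list of (action, next-state) steps. -/
structure FPath (S : Type u) (A : Type v) where
  start : S
  steps : List (A × S)

namespace FPath

def last (ρ : FPath S A) : S := lastState ρ.start ρ.steps

def states (ρ : FPath S A) : List S := ρ.start :: ρ.steps.map Prod.snd

def length (ρ : FPath S A) : ℕ := ρ.steps.length

end FPath

/-- A (raw) strategy: maps each finite path (start state + steps) to a distribution on actions. -/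
def Strat (S : Type u) (A : Type v) := S → List (A × S) → A → ℝ≥0∞

/-- Shifted strategy `σ_ρ` for `ρ = (s₀, pre)`: `σ_ρ(ρ') = σ(ρ·ρ')`. -/
def shiftStrat (σ : Strat S A) (s₀ : S) (pre : List (A × S)) : Strat S A :=
  fun _ steps a => σ s₀ (pre ++ steps) a

/-- Generic cylinder weight (product of strategy- and transition-probabilities along the
steps), relative to a transition kernel `p`. The accumulator `pre` is the path-prefix so far. -/
noncomputable def wtP (p : S → A → S → ℝ≥0∞) (σ : Strat S A) (s₀ : S) :
    List (A × S) → List (A × S) → ℝ≥0∞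
  | _, [] => 1
  | pre, (a, s') :: rest =>
      σ s₀ pre a * p (lastState s₀ pre) a s' * wtP p σ s₀ (pre ++ [(a, s')]) rest
  termination_by pre l => l.length

/-- Generic cylinder probability of path `ρ` from start state `s`, kernel `p`. -/
noncomputable def cylProbP (p : S → A → S → ℝ≥0∞) (σ : Strat S A) (s : S) (ρ : FPath S A) :
    ℝ≥0∞ :=
  if ρ.start = s then wtP p σ ρ.start [] ρ.steps else 0

namespace MDP

variable [Fintype S] [Fintype A]

def legal (M : MDP S A) (s : S) (a : A) : Prop := (M.P s a).isSome

noncomputable def prob (M : MDP S A) (s : S) (a : A) (s' : S) : ℝ≥0∞ :=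
  (M.P s a).elim 0 fun d => (d s' : ℝ≥0∞)

/-- `ρ` is a finite path of `M` from `s`: every action legal, every transition of
positive probability. -/
def IsPathFrom (M : MDP S A) : S → List (A × S) → Prop
  | _, [] => True
  | s, (a, s') :: rest => M.legal s a ∧ 0 < M.prob s a s' ∧ M.IsPathFrom s' rest

def IsPath (M : MDP S A) (ρ : FPath S A) : Prop := M.IsPathFrom ρ.start ρ.steps

/-- `σ` is a strategy: at every finite path it gives a probability distribution on actions
supported on actions legal at the last state. -/
def IsStrategy (M : MDP S A) (σ : Strat S A) : Prop :=
  ∀ s steps, M.IsPathFrom s steps →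
    (∑ a, σ s steps a) = 1 ∧ ∀ a, 0 < σ s steps a → M.legal (lastState s steps) a

/-- Cylinder probability `P_{σ,s}(ρ)` in `M`. -/
noncomputable def cylProb (M : MDP S A) (σ : Strat S A) (s : S) (ρ : FPath S A) : ℝ≥0∞ :=
  cylProbP M.prob σ s ρ

/-- `T` is a set of sink states: each `t ∈ T` has exactly one legal action, leading back
to `t` with probability `1`. -/
def SinkSet (M : MDP S A) (T : Set S) : Prop :=
  ∀ t ∈ T, (∃! a, M.legal t a) ∧ ∀ a, M.legal t a → M.prob t a t = 1

/-- Generic pruned finite-path predicate: all states have positive value `v` and every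
step uses an `opt` state-action pair with positive transition probability in `M`. -/
def IsPathFromPruned (M : MDP S A) (v : S → ℝ≥0∞) (opt : S → A → Prop) :
    S → List (A × S) → Prop
  | s, [] => 0 < v s
  | s, (a, s') :: rest =>
      0 < v s ∧ opt s a ∧ 0 < M.prob s a s' ∧ M.IsPathFromPruned v opt s' rest

/-! ### Reachability -/

/-- `ρ` is a `T`-hitting path: its last state lies in `T` and no other state does. -/
def HitsFirst (T : Set S) (ρ : FPath S A) : Prop :=
  ρ.last ∈ T ∧ ∀ x ∈ ρ.states.dropLast, x ∉ T

/-- `Pr_{σ,s}(◊T)`: sum over `T`-hitting paths starting at `s` of their cylinder probabilities. -/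
noncomputable def prReach (M : MDP S A) (σ : Strat S A) (s : S) (T : Set S) : ℝ≥0∞ :=
  ∑' ρ : {ρ : FPath S A // M.IsPath ρ ∧ HitsFirst T ρ ∧ ρ.start = s}, M.cylProb σ s ρ.1

/-- `Val(s)` for reachability: supremum over strategies of `Pr_{σ,s}(◊T)`. -/
noncomputable def reachVal (M : MDP S A) (T : Set S) (s : S) : ℝ≥0∞ :=
  ⨆ (σ : Strat S A) (_ : M.IsStrategy σ), M.prReach σ s T

/-- `(s,a) ∈ Opt` for reachability. -/
def OptR (M : MDP S A) (T : Set S) (s : S) (a : A) : Prop :=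
  M.legal s a ∧ M.reachVal T s = ∑ s', M.prob s a s' * M.reachVal T s'

/-- `σ ∈ Σ^Opt` for reachability. -/
def SigmaOptR (M : MDP S A) (T : Set S) (σ : Strat S A) : Prop :=
  ∀ s steps, M.IsPathFrom s steps → ∀ a, 0 < σ s steps a → M.OptR T (lastState s steps) a

/-- Transition probabilities of the pruned MDP `M'` for reachability. -/
noncomputable def probR' (M : MDP S A) (T : Set S) (s : S) (a : A) (s' : S) : ℝ≥0∞ :=
  if M.OptR T s a ∧ 0 < M.reachVal T s then
    M.prob s a s' * M.reachVal T s' / M.reachVal T s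
  else 0

/-- `ρ` is a finite path of the pruned MDP `M'` (reachability version). -/
def IsPathR' (M : MDP S A) (T : Set S) (ρ : FPath S A) : Prop :=
  M.IsPathFromPruned (M.reachVal T) (M.OptR T) ρ.start ρ.steps

/-- Cylinder probability `P'_{σ,s}(ρ)` in the pruned MDP `M'` (reachability version). -/
noncomputable def cylProbR' (M : MDP S A) (T : Set S) (σ : Strat S A) (s : S) (ρ : FPath S A) :
    ℝ≥0∞ :=
  cylProbP (M.probR' T) σ s ρ

/-- `Pr'_{σ,s}(◊T)` in the pruned MDP `M'`. -/
noncomputable def prReach' (M : MDP S A) (σ : Strat S A) (s : S) (T : Set S) : ℝ≥0∞ :=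
  ∑' ρ : {ρ : FPath S A // M.IsPathR' T ρ ∧ HitsFirst T ρ ∧ ρ.start = s},
    M.cylProbR' T σ s ρ.1

/-- Probability of hitting `T` for the first time in exactly `r` steps, in `M`. -/
noncomputable def hitLenProb (M : MDP S A) (σ : Strat S A) (s : S) (T : Set S) (r : ℕ) :
    ℝ≥0∞ :=
  ∑' ρ : {ρ : FPath S A // M.IsPath ρ ∧ HitsFirst T ρ ∧ ρ.start = s ∧ ρ.length = r},
    M.cylProb σ s ρ.1

/-- Probability of hitting `T` for the first time in exactly `r` steps, in `M'`. -/
noncomputable def hitLenProb' (M : MDP S A) (σ : Strat S A) (s : S) (T : Set S) (r : ℕ) :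
    ℝ≥0∞ :=
  ∑' ρ : {ρ : FPath S A // M.IsPathR' T ρ ∧ HitsFirst T ρ ∧ ρ.start = s ∧ ρ.length = r},
    M.cylProbR' T σ s ρ.1

/-- Conditional expected length to target `E_{σ,s}(len_T | ◊T)`. -/
noncomputable def condExpLen (M : MDP S A) (σ : Strat S A) (s : S) (T : Set S) : ℝ≥0∞ :=
  ∑' r : ℕ, (r : ℝ≥0∞) * M.hitLenProb σ s T r / M.prReach σ s T

/-- Expected length to target in `M'`, `E'_{σ,s}(len_T)`; `∞` unless `Pr'_{σ,s}(◊T) = 1`. -/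
noncomputable def expLen' (M : MDP S A) (σ : Strat S A) (s : S) (T : Set S) : ℝ≥0∞ :=
  if M.prReach' σ s T = 1 then ∑' r : ℕ, (r : ℝ≥0∞) * M.hitLenProb' σ s T r else ⊤

/-! ### Safety -/

/-- `Safe_n(σ,s)`: probability of the paths of length `n` from `s` avoiding `Bad`. -/
noncomputable def safeN (M : MDP S A) (σ : Strat S A) (s : S) (Bad : Set S) (n : ℕ) : ℝ≥0∞ :=
  ∑' ρ : {ρ : FPath S A //
      M.IsPath ρ ∧ ρ.start = s ∧ ρ.length = n ∧ ∀ x ∈ ρ.states, x ∉ Bad},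
    M.cylProb σ s ρ.1

/-- `Pr_{σ,s}(□¬Bad) := ⨅ n, Safe_n(σ,s)`. -/
noncomputable def prSafe (M : MDP S A) (σ : Strat S A) (s : S) (Bad : Set S) : ℝ≥0∞ :=
  ⨅ n : ℕ, M.safeN σ s Bad n

/-- `Val(s)` for safety: supremum over strategies of `Pr_{σ,s}(□¬Bad)`. -/
noncomputable def safeVal (M : MDP S A) (Bad : Set S) (s : S) : ℝ≥0∞ :=
  ⨆ (σ : Strat S A) (_ : M.IsStrategy σ), M.prSafe σ s Bad

/-- `(s,a) ∈ Opt` for safety. -/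
def OptS (M : MDP S A) (Bad : Set S) (s : S) (a : A) : Prop :=
  M.legal s a ∧ M.safeVal Bad s = ∑ s', M.prob s a s' * M.safeVal Bad s'

/-- `σ ∈ Σ^Opt` for safety. -/
def SigmaOptS (M : MDP S A) (Bad : Set S) (σ : Strat S A) : Prop :=
  ∀ s steps, M.IsPathFrom s steps → ∀ a, 0 < σ s steps a → M.OptS Bad (lastState s steps) a

/-- `UPreⁱ(Bad)`. -/
def UPre (M : MDP S A) (Bad : Set S) : ℕ → Set S
  | 0 => Bad
  | i + 1 => {s | ∀ a, M.legal s a → ∃ s' ∈ M.UPre Bad i, 0 < M.prob s a s'}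

/-- `Good := S \ UPre*(Bad)`. -/
def GoodSet (M : MDP S A) (Bad : Set S) : Set S := (⋃ i, M.UPre Bad i)ᶜ

/-- `V := S \ (Good ∪ Bad)`. -/
def VSet (M : MDP S A) (Bad : Set S) : Set S := (M.GoodSet Bad ∪ Bad)ᶜ

/-- `Pr_{σ,s}(GoodCyl(ρ)) := P_{σ,s}(ρ) · Pr_{σ_ρ, last(ρ)}(□¬Bad)`. -/
noncomputable def goodCyl (M : MDP S A) (σ : Strat S A) (s : S) (Bad : Set S) (ρ : FPath S A) :
    ℝ≥0∞ :=
  M.cylProb σ s ρ * M.prSafe (shiftStrat σ ρ.start ρ.steps) ρ.last Bad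

/-- Transition probabilities of the pruned MDP `M'` for safety. -/
noncomputable def probS' (M : MDP S A) (Bad : Set S) (s : S) (a : A) (s' : S) : ℝ≥0∞ :=
  if M.OptS Bad s a ∧ 0 < M.safeVal Bad s then
    M.prob s a s' * M.safeVal Bad s' / M.safeVal Bad s
  else 0

/-- `ρ` is a finite path of the pruned MDP `M'` (safety version). -/
def IsPathS' (M : MDP S A) (Bad : Set S) (ρ : FPath S A) : Prop :=
  M.IsPathFromPruned (M.safeVal Bad) (M.OptS Bad) ρ.start ρ.steps

/-- Cylinder probability `P'_{σ,s}(ρ)` in the pruned MDP `M'` (safety version). -/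
noncomputable def cylProbS' (M : MDP S A) (Bad : Set S) (σ : Strat S A) (s : S)
    (ρ : FPath S A) : ℝ≥0∞ :=
  cylProbP (M.probS' Bad) σ s ρ

end MDP

/-- `Reward_n(ρ) = ∑_{i<n} R(sᵢ, aᵢ)` for `ρ` starting at `s` with steps `steps`. -/
def rewardOf (R : S → A → ℝ) : S → List (A × S) → ℝ
  | _, [] => 0
  | s, (a, s') :: rest => R s a + rewardOf R s' rest

namespace MDP

variable [Fintype S] [Fintype A]

/-- `E'_{σ,s}(Reward_n)` in the pruned MDP `M'` (safety version). -/
noncomputable def expRewN' (M : MDP S A) (Bad : Set S) (R : S → A → ℝ) (σ : Strat S A)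
    (s : S) (n : ℕ) : ℝ :=
  ∑' ρ : {ρ : FPath S A // M.IsPathS' Bad ρ ∧ ρ.start = s ∧ ρ.length = n},
    (M.cylProbS' Bad σ s ρ.1).toReal * rewardOf R ρ.1.start ρ.1.steps

/-- `E'_{σ,s}(MP) := liminf_n (1/n)·E'_{σ,s}(Reward_n)`. -/
noncomputable def mp' (M : MDP S A) (Bad : Set S) (R : S → A → ℝ) (σ : Strat S A) (s : S) :
    ℝ :=
  Filter.atTop.liminf fun n : ℕ => M.expRewN' Bad R σ s n / n

/-- `E_{σ,s}(Reward_n | □¬Bad)`. -/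
noncomputable def condExpRewN (M : MDP S A) (Bad : Set S) (R : S → A → ℝ) (σ : Strat S A)
    (s : S) (n : ℕ) : ℝ :=
  (∑' ρ : {ρ : FPath S A // M.IsPath ρ ∧ ρ.start = s ∧ ρ.length = n},
    (M.goodCyl σ s Bad ρ.1).toReal * rewardOf R ρ.1.start ρ.1.steps) /
  (M.prSafe σ s Bad).toReal

/-- `E_{σ,s}(MP | □¬Bad) := liminf_n (1/n)·E_{σ,s}(Reward_n | □¬Bad)`. -/
noncomputable def condMP (M : MDP S A) (Bad : Set S) (R : S → A → ℝ) (σ : Strat S A)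
    (s : S) : ℝ :=
  Filter.atTop.liminf fun n : ℕ => M.condExpRewN Bad R σ s n / n

end MDP



/-! ### Auxiliary development for Statement 11 -/

section Aux11
set_option linter.unusedSectionVars false

variable {S : Type u} {A : Type v} [Fintype S] [Fintype A]

lemma lastState_append (s : S) (l1 l2 : List (A × S)) :
    lastState s (l1 ++ l2) = lastState (lastState s l1) l2 := by
  induction l1 generalizing s with
  | nil => rfl
  | cons x xs ih => exact ih x.2

lemma isPathFrom_nil (M : MDP S A) (s : S) : M.IsPathFrom s [] := trivial

lemma isPathFrom_cons (M : MDP S A) (s : S) (a : A) (s' : S) (l : List (A × S)) :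
    M.IsPathFrom s ((a, s') :: l) ↔
      M.legal s a ∧ 0 < M.prob s a s' ∧ M.IsPathFrom s' l := Iff.rfl

lemma isPathFrom_append (M : MDP S A) {s : S} {l1 : List (A × S)}
    (h : M.IsPathFrom s l1) (l2 : List (A × S))
    (h2 : M.IsPathFrom (lastState s l1) l2) : M.IsPathFrom s (l1 ++ l2) := by
  induction l1 generalizing s with
  | nil => exact h2
  | cons x xs ih =>
    obtain ⟨hleg, hp, hrest⟩ := h
    exact ⟨hleg, hp, ih hrest h2⟩

lemma legal_of_prob_pos (M : MDP S A) {s : S} {a : A} {s' : S}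
    (h : 0 < M.prob s a s') : M.legal s a := by
  unfold MDP.prob at h
  unfold MDP.legal
  cases hP : M.P s a with
  | none => rw [hP] at h; simp at h
  | some d => rfl

lemma sum_prob_eq_one (M : MDP S A) {s : S} {a : A} (h : M.legal s a) :
    ∑ s' : S, M.prob s a s' = 1 := by
  obtain ⟨d, hd⟩ := Option.isSome_iff_exists.mp h
  have hsum := M.sum_one s a d hd
  unfold MDP.prob
  rw [hd]
  simp only [Option.elim]
  rw [← ENNReal.coe_finset_sum, hsum, ENNReal.coe_one]

lemma prob_le_one (M : MDP S A) (s : S) (a : A) (s' : S) : M.prob s a s' ≤ 1 := by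
  by_cases h : M.legal s a
  · rw [← sum_prob_eq_one M h]
    exact Finset.single_le_sum (fun _ _ => zero_le) (Finset.mem_univ s')
  · unfold MDP.prob
    unfold MDP.legal at h
    cases hP : M.P s a with
    | none => simp
    | some d => rw [hP] at h; simp at h

lemma prob_ne_top (M : MDP S A) (s : S) (a : A) (s' : S) : M.prob s a s' ≠ ⊤ :=
  fun h => by simpa [h] using prob_le_one M s a s'

lemma wtP_congr (p : S → A → S → ℝ≥0∞) (σ₁ σ₂ : Strat S A) (s₀ : S)
    (h : ∀ pre a, σ₁ s₀ pre a = σ₂ s₀ pre a) :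
    ∀ (l pre : List (A × S)), wtP p σ₁ s₀ pre l = wtP p σ₂ s₀ pre l := by
  intro l
  induction l with
  | nil => intro pre; simp [wtP]
  | cons x xs ih =>
    intro pre
    obtain ⟨a, s'⟩ := x
    simp only [wtP]
    rw [h pre a, ih (pre ++ [(a, s')])]

lemma wtP_shift (p : S → A → S → ℝ≥0∞) (σ : Strat S A) (s₀ : S) (pre0 : List (A × S)) :
    ∀ (l pre : List (A × S)),
      wtP p (shiftStrat σ s₀ pre0) (lastState s₀ pre0) pre l = wtP p σ s₀ (pre0 ++ pre) l := by
  intro l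
  induction l with
  | nil => intro pre; simp [wtP]
  | cons x xs ih =>
    intro pre
    obtain ⟨a, s'⟩ := x
    simp only [wtP]
    rw [ih (pre ++ [(a, s')])]
    rw [← List.append_assoc]
    congr 2
    rw [lastState_append]

/-- Local strategy property at `s`. -/
def LocStrat (M : MDP S A) (σ : Strat S A) (s : S) : Prop :=
  ∀ steps, M.IsPathFrom s steps →
    (∑ a, σ s steps a) = 1 ∧ ∀ a, 0 < σ s steps a → M.legal (lastState s steps) a

/-- Local optimality property at `s`. -/
def LocOpt (M : MDP S A) (Bad : Set S) (σ : Strat S A) (s : S) : Prop :=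
  ∀ steps, M.IsPathFrom s steps → ∀ a, 0 < σ s steps a →
    M.OptS Bad (lastState s steps) a

lemma locStrat_of_isStrategy {M : MDP S A} {σ : Strat S A} (h : M.IsStrategy σ) (s : S) :
    LocStrat M σ s := fun steps hsteps => h s steps hsteps

lemma locOpt_of_sigmaOpt {M : MDP S A} {Bad : Set S} {σ : Strat S A}
    (h : M.SigmaOptS Bad σ) (s : S) : LocOpt M Bad σ s :=
  fun steps hsteps => h s steps hsteps

lemma LocStrat.shift {M : MDP S A} {σ : Strat S A} {s : S} (h : LocStrat M σ s)
    {pre : List (A × S)} (hpre : M.IsPathFrom s pre) :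
    LocStrat M (shiftStrat σ s pre) (lastState s pre) := by
  intro steps hsteps
  have h2 := h (pre ++ steps) (isPathFrom_append M hpre steps hsteps)
  rw [lastState_append] at h2
  exact h2

lemma LocOpt.shift {M : MDP S A} {Bad : Set S} {σ : Strat S A} {s : S}
    (h : LocOpt M Bad σ s) {pre : List (A × S)} (hpre : M.IsPathFrom s pre) :
    LocOpt M Bad (shiftStrat σ s pre) (lastState s pre) := by
  intro steps hsteps
  have h2 := h (pre ++ steps) (isPathFrom_append M hpre steps hsteps)
  rw [lastState_append] at h2
  exact h2

/-- Paths as pairs. -/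
def fpathEquiv : FPath S A ≃ S × List (A × S) :=
  ⟨fun ρ => (ρ.start, ρ.steps), fun p => ⟨p.1, p.2⟩, fun _ => rfl, fun _ => rfl⟩

/-- The list-level summand for `safeN`. -/
noncomputable def gsafe (M : MDP S A) (Bad : Set S) (σ : Strat S A) (s : S) (n : ℕ)
    (l : List (A × S)) : ℝ≥0∞ :=
  if M.IsPathFrom s l ∧ l.length = n ∧ ∀ x ∈ s :: l.map Prod.snd, x ∉ Bad then
    wtP M.prob σ s [] l else 0

lemma safeN_eq_tsum_gsafe (M : MDP S A) (Bad : Set S) (σ : Strat S A) (s : S) (n : ℕ) :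
    M.safeN σ s Bad n = ∑' l : List (A × S), gsafe M Bad σ s n l := by
  classical
  set Q : Set (FPath S A) :=
    {ρ | M.IsPath ρ ∧ ρ.start = s ∧ ρ.length = n ∧ ∀ x ∈ ρ.states, x ∉ Bad} with hQ
  have h1 : M.safeN σ s Bad n = ∑' ρ : FPath S A, Q.indicator (M.cylProb σ s) ρ :=
    tsum_subtype Q (M.cylProb σ s)
  rw [h1]
  rw [← (fpathEquiv (S := S) (A := A)).symm.tsum_eq (Q.indicator (M.cylProb σ s))]
  rw [ENNReal.tsum_prod']
  rw [tsum_eq_single s]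
  · apply tsum_congr
    intro l
    show Q.indicator (M.cylProb σ s) (⟨s, l⟩ : FPath S A) = _
    rw [Set.indicator_apply]
    unfold Q
    simp only [Set.mem_setOf_eq, gsafe, MDP.cylProb, cylProbP, MDP.IsPath, FPath.states,
      FPath.length, if_pos rfl]
    congr 1
    simp
  · intro s' hs'
    have hz : ∀ l : List (A × S), Q.indicator (M.cylProb σ s) (fpathEquiv.symm (s', l)) = 0 := by
      intro l
      show Q.indicator (M.cylProb σ s) (⟨s', l⟩ : FPath S A) = 0
      rw [Set.indicator_apply]
      unfold Q
      simp only [Set.mem_setOf_eq]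
      split
      · next h => exact absurd h.2.1 hs'
      · rfl
    simp only [hz, tsum_zero]

lemma safeN_zero (M : MDP S A) (Bad : Set S) (σ : Strat S A) (s : S) :
    M.safeN σ s Bad 0 = if s ∈ Bad then 0 else 1 := by
  classical
  rw [safeN_eq_tsum_gsafe]
  rw [tsum_eq_single ([] : List (A × S))]
  · simp only [gsafe, List.map_nil]
    by_cases hs : s ∈ Bad
    · rw [if_neg, if_pos hs]
      simp [hs]
    · rw [if_pos, if_neg hs]
      · simp [wtP]
      · exact ⟨isPathFrom_nil M s, by simp, by simp [hs]⟩
  · intro l hl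
    simp only [gsafe]
    rw [if_neg]
    rintro ⟨-, hlen, -⟩
    exact hl (List.length_eq_zero_iff.mp hlen)

lemma safeN_bad (M : MDP S A) {Bad : Set S} (σ : Strat S A) {s : S} (hs : s ∈ Bad) (n : ℕ) :
    M.safeN σ s Bad n = 0 := by
  rw [safeN_eq_tsum_gsafe]
  have : ∀ l : List (A × S), gsafe M Bad σ s n l = 0 := by
    intro l
    simp only [gsafe]
    rw [if_neg]
    rintro ⟨-, -, havoid⟩
    exact havoid s List.mem_cons_self hs
  simp [this]

lemma safeN_congr (M : MDP S A) (Bad : Set S) {σ₁ σ₂ : Strat S A} {s : S}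
    (h : ∀ steps a, σ₁ s steps a = σ₂ s steps a) (n : ℕ) :
    M.safeN σ₁ s Bad n = M.safeN σ₂ s Bad n := by
  rw [safeN_eq_tsum_gsafe, safeN_eq_tsum_gsafe]
  apply tsum_congr
  intro l
  simp only [gsafe]
  rw [wtP_congr M.prob σ₁ σ₂ s h l []]

lemma gsafe_cons (M : MDP S A) (Bad : Set S) (σ : Strat S A) {s : S} (hs : s ∉ Bad)
    (n : ℕ) (a : A) (s' : S) (l : List (A × S)) :
    gsafe M Bad σ s (n + 1) ((a, s') :: l) =
      σ s [] a * (M.prob s a s' *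
        gsafe M Bad (shiftStrat σ s [(a, s')]) s' n l) := by
  classical
  by_cases hp : 0 < M.prob s a s'
  · have hleg : M.legal s a := legal_of_prob_pos M hp
    by_cases hc : M.IsPathFrom s' l ∧ l.length = n ∧ ∀ x ∈ s' :: l.map Prod.snd, x ∉ Bad
    · rw [gsafe, if_pos, gsafe, if_pos hc]
      · have hwt : wtP M.prob σ s [] ((a, s') :: l) =
            σ s [] a * M.prob s a s' * wtP M.prob σ s [(a, s')] l := by
          simp [wtP, lastState]
        have hsh : wtP M.prob (shiftStrat σ s [(a, s')]) s' [] l =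
            wtP M.prob σ s [(a, s')] l := by
          have := wtP_shift M.prob σ s [(a, s')] l []
          simpa [lastState] using this
        rw [hwt, hsh, mul_assoc]
      · refine ⟨⟨hleg, hp, hc.1⟩, by simp [hc.2.1], ?_⟩
        intro x hx
        simp only [List.map_cons, List.mem_cons] at hx
        rcases hx with rfl | hx
        · exact hs
        · exact hc.2.2 x (by simpa using hx)
    · rw [gsafe, if_neg, gsafe, if_neg hc, mul_zero, mul_zero]
      rintro ⟨hpath, hlen, havoid⟩
      refine hc ⟨hpath.2.2, ?_, ?_⟩
      · simpa using hlen
      · intro x hx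
        apply havoid
        simp only [List.map_cons, List.mem_cons] at hx ⊢
        tauto
  · have hp0 : M.prob s a s' = 0 := by simpa using hp
    rw [hp0, zero_mul, mul_zero, gsafe, if_neg]
    rintro ⟨hpath, -, -⟩
    exact hp ((isPathFrom_cons M s a s' l).mp hpath).2.1

lemma safeN_succ (M : MDP S A) (Bad : Set S) (σ : Strat S A) {s : S} (hs : s ∉ Bad) (n : ℕ) :
    M.safeN σ s Bad (n + 1) =
      ∑ a : A, ∑ s' : S,
        σ s [] a * (M.prob s a s' * M.safeN (shiftStrat σ s [(a, s')]) s' Bad n) := by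
  classical
  rw [safeN_eq_tsum_gsafe]
  have h0 : gsafe M Bad σ s (n + 1) [] = 0 := by
    simp only [gsafe]
    rw [if_neg]
    rintro ⟨-, hlen, -⟩
    simp at hlen
  have hinj : Function.Injective (fun p : (A × S) × List (A × S) => p.1 :: p.2) := by
    intro p q hpq
    simp only [List.cons.injEq] at hpq
    exact Prod.ext hpq.1 hpq.2
  have hsupp : Function.support (gsafe M Bad σ s (n + 1)) ⊆
      Set.range (fun p : (A × S) × List (A × S) => p.1 :: p.2) := by
    intro l hl
    cases l with
    | nil => exact absurd h0 hl
    | cons x xs => exact ⟨(x, xs), rfl⟩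
  have key := hinj.tsum_eq (f := gsafe M Bad σ s (n + 1)) hsupp
  rw [← key]
  rw [ENNReal.tsum_prod']
  rw [tsum_fintype]
  rw [Fintype.sum_prod_type]
  dsimp only
  apply Finset.sum_congr rfl
  intro a _
  apply Finset.sum_congr rfl
  intro s' _
  rw [show (fun l => gsafe M Bad σ s (n + 1) ((a, s') :: l)) = fun l =>
      σ s [] a * (M.prob s a s' * gsafe M Bad (shiftStrat σ s [(a, s')]) s' n l) from by
    funext l; exact gsafe_cons M Bad σ hs n a s' l]
  rw [ENNReal.tsum_mul_left, ENNReal.tsum_mul_left, safeN_eq_tsum_gsafe]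

lemma safeN_le_one (M : MDP S A) (Bad : Set S) :
    ∀ (n : ℕ) (s : S) (σ : Strat S A), LocStrat M σ s → M.safeN σ s Bad n ≤ 1 := by
  intro n
  induction n with
  | zero =>
    intro s σ _
    rw [safeN_zero]
    split <;> simp
  | succ n ih =>
    intro s σ hσ
    by_cases hs : s ∈ Bad
    · rw [safeN_bad M σ hs]; exact zero_le_one
    · rw [safeN_succ M Bad σ hs n]
      calc ∑ a : A, ∑ s' : S,
            σ s [] a * (M.prob s a s' * M.safeN (shiftStrat σ s [(a, s')]) s' Bad n)
          ≤ ∑ a : A, σ s [] a * 1 := by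
            apply Finset.sum_le_sum
            intro a _
            rw [← Finset.mul_sum]
            by_cases ha : 0 < σ s [] a
            · apply mul_le_mul' le_rfl
              have hleg : M.legal s a := by
                have := (hσ [] (isPathFrom_nil M s)).2 a ha
                simpa [lastState] using this
              calc ∑ s' : S, M.prob s a s' * M.safeN (shiftStrat σ s [(a, s')]) s' Bad n
                  ≤ ∑ s' : S, M.prob s a s' := by
                    apply Finset.sum_le_sum
                    intro s' _
                    by_cases hp : 0 < M.prob s a s'
                    · have hsh : LocStrat M (shiftStrat σ s [(a, s')]) s' := by
                        have := hσ.shift (pre := [(a, s')]) ⟨hleg, hp, trivial⟩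
                        simpa [lastState] using this
                      calc M.prob s a s' * M.safeN (shiftStrat σ s [(a, s')]) s' Bad n
                          ≤ M.prob s a s' * 1 := mul_le_mul' le_rfl (ih s' _ hsh)
                        _ = M.prob s a s' := mul_one _
                    · have : M.prob s a s' = 0 := by simpa using hp
                      simp [this]
                _ = 1 := sum_prob_eq_one M hleg
            · have : σ s [] a = 0 := by simpa using ha
              simp [this]
        _ = ∑ a : A, σ s [] a := by simp
        _ = 1 := (hσ [] (isPathFrom_nil M s)).1

lemma upre_mono (M : MDP S A) {Bad : Set S} (hBad : M.SinkSet Bad) :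
    ∀ i : ℕ, M.UPre Bad i ⊆ M.UPre Bad (i + 1) := by
  intro i
  induction i with
  | zero =>
    intro t ht a ha
    exact ⟨t, ht, by rw [(hBad t ht).2 a ha]; exact zero_lt_one⟩
  | succ i ih =>
    intro t ht a ha
    obtain ⟨s', hs', hp⟩ := ht a ha
    exact ⟨s', ih hs', hp⟩

lemma upre_mono_le (M : MDP S A) {Bad : Set S} (hBad : M.SinkSet Bad) {i j : ℕ}
    (hij : i ≤ j) : M.UPre Bad i ⊆ M.UPre Bad j := by
  induction j, hij using Nat.le_induction with
  | base => exact subset_rfl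
  | succ j _ ih => exact ih.trans (upre_mono M hBad j)

lemma mem_goodSet_iff (M : MDP S A) (Bad : Set S) (s : S) :
    s ∈ M.GoodSet Bad ↔ ∀ i, s ∉ M.UPre Bad i := by
  simp [MDP.GoodSet, Set.mem_iUnion, not_exists]

lemma good_not_bad (M : MDP S A) {Bad : Set S} {g : S} (hg : g ∈ M.GoodSet Bad) :
    g ∉ Bad := (mem_goodSet_iff M Bad g).mp hg 0

lemma exists_delta (M : MDP S A) : ∃ δ : ℝ≥0∞, 0 < δ ∧ δ ≤ 1 ∧
    ∀ s a s', 0 < M.prob s a s' → δ ≤ M.prob s a s' := by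
  classical
  set F : Finset (S × A × S) :=
    Finset.univ.filter (fun x : S × A × S => 0 < M.prob x.1 x.2.1 x.2.2) with hF
  rcases F.eq_empty_or_nonempty with hE | hne
  · refine ⟨1, zero_lt_one, le_rfl, fun s a s' hp => ?_⟩
    exact absurd (show (s, a, s') ∈ F by simp [hF, hp]) (by simp [hE])
  · refine ⟨F.inf' hne (fun x => M.prob x.1 x.2.1 x.2.2), ?_, ?_, ?_⟩
    · rw [Finset.lt_inf'_iff]
      intro b hb
      exact (Finset.mem_filter.mp hb).2
    · obtain ⟨x, hx⟩ := hne
      exact le_trans (Finset.inf'_le _ hx) (prob_le_one M x.1 x.2.1 x.2.2)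
    · intro s a s' hp
      exact Finset.inf'_le _ (show (s, a, s') ∈ F by simp [hF, hp])

lemma upre_bound (M : MDP S A) (Bad : Set S) {δ : ℝ≥0∞} (hδ1 : δ ≤ 1)
    (hδ : ∀ s a s', 0 < M.prob s a s' → δ ≤ M.prob s a s') :
    ∀ (i : ℕ) (s : S) (σ : Strat S A), s ∈ M.UPre Bad i → LocStrat M σ s →
      M.safeN σ s Bad i + δ ^ i ≤ 1 := by
  intro i
  induction i with
  | zero =>
    intro s σ hs _
    rw [safeN_bad M σ (show s ∈ Bad from hs), pow_zero, zero_add]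
  | succ i ih =>
    intro s σ hs hσ
    by_cases hsB : s ∈ Bad
    · rw [safeN_bad M σ hsB, zero_add]
      exact pow_le_one' hδ1 (i + 1)
    · rw [safeN_succ M Bad σ hsB i]
      have hsum : ∑ a, σ s [] a = 1 := (hσ [] (isPathFrom_nil M s)).1
      have step1 : (∑ a : A, ∑ s' : S,
            σ s [] a * (M.prob s a s' * M.safeN (shiftStrat σ s [(a, s')]) s' Bad i))
            + δ ^ (i + 1)
          = ∑ a : A, σ s [] a *
              ((∑ s' : S, M.prob s a s' * M.safeN (shiftStrat σ s [(a, s')]) s' Bad i)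
                + δ ^ (i + 1)) := by
        conv_lhs => rw [← one_mul (δ ^ (i + 1)), ← hsum, Finset.sum_mul,
          ← Finset.sum_add_distrib]
        apply Finset.sum_congr rfl
        intro a _
        rw [← Finset.mul_sum, ← mul_add]
      rw [step1]
      calc ∑ a : A, σ s [] a *
              ((∑ s' : S, M.prob s a s' * M.safeN (shiftStrat σ s [(a, s')]) s' Bad i)
                + δ ^ (i + 1))
          ≤ ∑ a : A, σ s [] a * 1 := by
            apply Finset.sum_le_sum
            intro a _
            by_cases ha : 0 < σ s [] a
            · apply mul_le_mul' le_rfl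
              have hleg : M.legal s a := by
                have := (hσ [] (isPathFrom_nil M s)).2 a ha
                simpa [lastState] using this
              obtain ⟨s0, hs0U, hs0p⟩ := hs a hleg
              have hδp : δ ^ (i + 1) ≤ M.prob s a s0 * δ ^ i := by
                rw [pow_succ]
                calc δ ^ i * δ ≤ δ ^ i * M.prob s a s0 :=
                      mul_le_mul' le_rfl (hδ _ _ _ hs0p)
                  _ = M.prob s a s0 * δ ^ i := mul_comm _ _
              have hshS : LocStrat M (shiftStrat σ s [(a, s0)]) s0 := by
                have := hσ.shift (pre := [(a, s0)]) ((isPathFrom_cons M s a s0 []).mpr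
                  ⟨hleg, hs0p, trivial⟩)
                simpa [lastState] using this
              have hIH := ih s0 (shiftStrat σ s [(a, s0)]) hs0U hshS
              have hsplit : ∑ s' : S, M.prob s a s' * M.safeN (shiftStrat σ s [(a, s')]) s' Bad i
                  = M.prob s a s0 * M.safeN (shiftStrat σ s [(a, s0)]) s0 Bad i +
                    ∑ s' ∈ Finset.univ.erase s0,
                      M.prob s a s' * M.safeN (shiftStrat σ s [(a, s')]) s' Bad i :=
                (Finset.add_sum_erase _ _ (Finset.mem_univ s0)).symm
              calc (∑ s' : S, M.prob s a s' * M.safeN (shiftStrat σ s [(a, s')]) s' Bad i)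
                    + δ ^ (i + 1)
                  ≤ (M.prob s a s0 * M.safeN (shiftStrat σ s [(a, s0)]) s0 Bad i +
                      ∑ s' ∈ Finset.univ.erase s0,
                        M.prob s a s' * M.safeN (shiftStrat σ s [(a, s')]) s' Bad i)
                    + M.prob s a s0 * δ ^ i := add_le_add (le_of_eq hsplit) hδp
                _ = M.prob s a s0 * (M.safeN (shiftStrat σ s [(a, s0)]) s0 Bad i + δ ^ i) +
                      ∑ s' ∈ Finset.univ.erase s0,
                        M.prob s a s' * M.safeN (shiftStrat σ s [(a, s')]) s' Bad i := by
                    ring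
                _ ≤ M.prob s a s0 * 1 +
                      ∑ s' ∈ Finset.univ.erase s0, M.prob s a s' := by
                    apply add_le_add (mul_le_mul' le_rfl hIH)
                    apply Finset.sum_le_sum
                    intro s' _
                    by_cases hp : 0 < M.prob s a s'
                    · have hsh' : LocStrat M (shiftStrat σ s [(a, s')]) s' := by
                        have := hσ.shift (pre := [(a, s')]) ((isPathFrom_cons M s a s' []).mpr
                          ⟨hleg, hp, trivial⟩)
                        simpa [lastState] using this
                      calc M.prob s a s' * M.safeN (shiftStrat σ s [(a, s')]) s' Bad i
                          ≤ M.prob s a s' * 1 :=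
                            mul_le_mul' le_rfl (safeN_le_one M Bad i s' _ hsh')
                        _ = M.prob s a s' := mul_one _
                    · have h0 : M.prob s a s' = 0 := by simpa using hp
                      simp [h0]
                _ = ∑ s' : S, M.prob s a s' := by
                    rw [mul_one]
                    exact Finset.add_sum_erase _ _ (Finset.mem_univ s0)
                _ = 1 := sum_prob_eq_one M hleg
            · have h0 : σ s [] a = 0 := by simpa using ha
              simp [h0]
        _ = ∑ a : A, σ s [] a := by simp
        _ = 1 := hsum

lemma safeVal_le_one (M : MDP S A) (Bad : Set S) (s : S) : M.safeVal Bad s ≤ 1 := by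
  apply iSup_le
  intro σ
  apply iSup_le
  intro _
  refine le_trans (iInf_le _ 0) ?_
  rw [safeN_zero]
  split <;> simp

lemma safeVal_lt_one (M : MDP S A) (Bad : Set S) {s : S} {i : ℕ}
    (hs : s ∈ M.UPre Bad i) : M.safeVal Bad s < 1 := by
  obtain ⟨δ, hδ0, hδ1, hδ⟩ := exists_delta M
  have hδi : δ ^ i ≠ ⊤ := ((pow_le_one' hδ1 i).trans_lt ENNReal.one_lt_top).ne
  have hb : M.safeVal Bad s ≤ 1 - δ ^ i := by
    apply iSup_le
    intro σ
    apply iSup_le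
    intro hσ
    have h1 : M.safeN σ s Bad i + δ ^ i ≤ 1 :=
      upre_bound M Bad hδ1 hδ i s σ hs (locStrat_of_isStrategy hσ s)
    exact le_trans (iInf_le _ i) (ENNReal.le_sub_of_add_le_right hδi h1)
  exact lt_of_le_of_lt hb
    (ENNReal.sub_lt_self ENNReal.one_ne_top one_ne_zero (ENNReal.pow_pos hδ0 i).ne')

lemma good_of_val_eq_one (M : MDP S A) (Bad : Set S) {s : S}
    (h : M.safeVal Bad s = 1) : s ∈ M.GoodSet Bad := by
  rw [mem_goodSet_iff]
  intro i hi
  exact absurd h (safeVal_lt_one M Bad hi).ne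

lemma exists_good_action (M : MDP S A) {Bad : Set S} (hBad : M.SinkSet Bad) {g : S}
    (hg : g ∈ M.GoodSet Bad) :
    ∃ a, M.legal g a ∧ ∀ s', 0 < M.prob g a s' → s' ∈ M.GoodSet Bad := by
  have hg' : ∀ k, g ∉ M.UPre Bad k := (mem_goodSet_iff M Bad g).mp hg
  have hch : ∀ k : ℕ, ∃ a, M.legal g a ∧ ∀ s' ∈ M.UPre Bad k, ¬ 0 < M.prob g a s' := by
    intro k
    have h := hg' (k + 1)
    simp only [MDP.UPre, Set.mem_setOf_eq] at h
    push_neg at h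
    obtain ⟨a, ha, hforall⟩ := h
    exact ⟨a, ha, fun s' hs' => not_lt.mpr (hforall s' hs')⟩
  choose f hleg hf using hch
  obtain ⟨a, hfib⟩ := Finite.exists_infinite_fiber f
  have hfib' : (f ⁻¹' {a}).Infinite := Set.infinite_coe_iff.mp hfib
  obtain ⟨k0, hk0⟩ := hfib'.nonempty
  refine ⟨a, ?_, ?_⟩
  · have hk0' : f k0 = a := hk0
    exact hk0' ▸ hleg k0
  · intro s' hp
    rw [mem_goodSet_iff]
    intro k hk
    obtain ⟨k', hk', hkk'⟩ := hfib'.exists_gt k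
    have hmem : s' ∈ M.UPre Bad k' := upre_mono_le M hBad (le_of_lt hkk') hk
    have hfk' : f k' = a := hk'
    exact hf k' s' hmem (by rw [hfk']; exact hp)

lemma exists_choice (M : MDP S A) {Bad : Set S} (hBad : M.SinkSet Bad) :
    ∃ c : S → A, (∀ t, M.legal t (c t)) ∧
      ∀ t, t ∈ M.GoodSet Bad → ∀ s', 0 < M.prob t (c t) s' → s' ∈ M.GoodSet Bad := by
  have h : ∀ t : S, ∃ a, M.legal t a ∧
      (t ∈ M.GoodSet Bad → ∀ s', 0 < M.prob t a s' → s' ∈ M.GoodSet Bad) := by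
    intro t
    by_cases ht : t ∈ M.GoodSet Bad
    · obtain ⟨a, h1, h2⟩ := exists_good_action M hBad ht
      exact ⟨a, h1, fun _ => h2⟩
    · obtain ⟨a, ha⟩ := M.exists_legal t
      exact ⟨a, ha, fun hmem => absurd hmem ht⟩
  choose c h1 h2 using h
  exact ⟨c, h1, h2⟩

/-- The memoryless strategy induced by a choice function. -/
noncomputable def tstar (c : S → A) : Strat S A :=
  fun s steps a => if a = c (lastState s steps) then 1 else 0

lemma tstar_isStrategy (M : MDP S A) (c : S → A) (hc : ∀ t, M.legal t (c t)) :
    M.IsStrategy (tstar c) := by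
  intro s steps _
  constructor
  · simp [tstar]
  · intro a ha
    have haeq : a = c (lastState s steps) := by
      by_contra h
      simp [tstar, h] at ha
    rw [haeq]
    exact hc _

lemma tstar_safeN (M : MDP S A) {Bad : Set S} (c : S → A) (hc1 : ∀ t, M.legal t (c t))
    (hc2 : ∀ t, t ∈ M.GoodSet Bad → ∀ s', 0 < M.prob t (c t) s' → s' ∈ M.GoodSet Bad) :
    ∀ n, ∀ g ∈ M.GoodSet Bad, M.safeN (tstar c) g Bad n = 1 := by
  intro n
  induction n with
  | zero =>
    intro g hg
    rw [safeN_zero, if_neg (good_not_bad M hg)]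
  | succ n ih =>
    intro g hg
    have hgB : g ∉ Bad := good_not_bad M hg
    rw [safeN_succ M Bad _ hgB n]
    have hsh : ∀ (a : A) (s' : S),
        M.safeN (shiftStrat (tstar c) g [(a, s')]) s' Bad n = M.safeN (tstar c) s' Bad n := by
      intro a s'
      exact safeN_congr M Bad (σ₁ := shiftStrat (tstar c) g [(a, s')]) (σ₂ := tstar c)
        (s := s') (fun steps b => rfl) n
    have hterm : ∀ a : A, (∑ s' : S, tstar c g [] a *
          (M.prob g a s' * M.safeN (shiftStrat (tstar c) g [(a, s')]) s' Bad n))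
        = if a = c g then ∑ s' : S, M.prob g a s' * M.safeN (tstar c) s' Bad n else 0 := by
      intro a
      by_cases h : a = c g
      · rw [if_pos h]
        apply Finset.sum_congr rfl
        intro s' _
        have h1 : tstar c g [] a = 1 := by simp [tstar, lastState, h]
        rw [h1, one_mul, hsh]
      · rw [if_neg h]
        have h0 : tstar c g [] a = 0 := by simp [tstar, lastState, h]
        simp [h0]
    rw [Finset.sum_congr rfl (fun a _ => hterm a)]
    rw [Finset.sum_ite_eq' Finset.univ (c g)
      (fun a => ∑ s' : S, M.prob g a s' * M.safeN (tstar c) s' Bad n)]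
    rw [if_pos (Finset.mem_univ _)]
    have hone : ∀ s' : S, M.prob g (c g) s' * M.safeN (tstar c) s' Bad n
        = M.prob g (c g) s' := by
      intro s'
      by_cases hp : 0 < M.prob g (c g) s'
      · rw [ih s' (hc2 g hg s' hp), mul_one]
      · have h0 : M.prob g (c g) s' = 0 := by simpa using hp
        simp [h0]
    rw [Finset.sum_congr rfl (fun s' _ => hone s')]
    exact sum_prob_eq_one M (hc1 g)

lemma good_val_one (M : MDP S A) {Bad : Set S} (hBad : M.SinkSet Bad) {g : S}
    (hg : g ∈ M.GoodSet Bad) : M.safeVal Bad g = 1 := by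
  obtain ⟨c, hc1, hc2⟩ := exists_choice M hBad
  apply le_antisymm (safeVal_le_one M Bad g)
  have h1 : M.prSafe (tstar c) g Bad = 1 := by
    have hsn := tstar_safeN M c hc1 hc2
    simp [MDP.prSafe, fun n => hsn n g hg]
  calc (1 : ℝ≥0∞) = M.prSafe (tstar c) g Bad := h1.symm
    _ ≤ M.safeVal Bad g :=
      le_iSup₂ (f := fun (σ : Strat S A) (_ : M.IsStrategy σ) => M.prSafe σ g Bad)
        (tstar c) (tstar_isStrategy M c hc1)

lemma succ_val_one (M : MDP S A) (Bad : Set S) {t : S} {a : A}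
    (hleg : M.legal t a)
    (hVal : (1 : ℝ≥0∞) = ∑ s', M.prob t a s' * M.safeVal Bad s') {s0 : S}
    (hp : 0 < M.prob t a s0) : M.safeVal Bad s0 = 1 := by
  by_contra hne
  have hlt : M.safeVal Bad s0 < 1 := lt_of_le_of_ne (safeVal_le_one M Bad s0) hne
  have hstrict : ∑ s' : S, M.prob t a s' * M.safeVal Bad s' < 1 := by
    have hcne : (∑ s' ∈ Finset.univ.erase s0, M.prob t a s' * M.safeVal Bad s') ≠ ⊤ := by
      apply ne_top_of_le_ne_top ENNReal.one_ne_top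
      calc ∑ s' ∈ Finset.univ.erase s0, M.prob t a s' * M.safeVal Bad s'
          ≤ ∑ s' ∈ Finset.univ.erase s0, M.prob t a s' := by
            apply Finset.sum_le_sum
            intro s' _
            calc M.prob t a s' * M.safeVal Bad s' ≤ M.prob t a s' * 1 :=
                  mul_le_mul' le_rfl (safeVal_le_one M Bad s')
              _ = M.prob t a s' := mul_one _
        _ ≤ ∑ s' : S, M.prob t a s' :=
            Finset.sum_le_sum_of_subset (Finset.erase_subset _ _)
        _ = 1 := sum_prob_eq_one M hleg
    calc ∑ s' : S, M.prob t a s' * M.safeVal Bad s'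
        = M.prob t a s0 * M.safeVal Bad s0 +
            ∑ s' ∈ Finset.univ.erase s0, M.prob t a s' * M.safeVal Bad s' :=
          (Finset.add_sum_erase _ _ (Finset.mem_univ s0)).symm
      _ < M.prob t a s0 * 1 +
            ∑ s' ∈ Finset.univ.erase s0, M.prob t a s' * M.safeVal Bad s' :=
          ENNReal.add_lt_add_right hcne
            ((ENNReal.mul_lt_mul_iff_right hp.ne' (prob_ne_top M t a s0)).mpr hlt)
      _ ≤ M.prob t a s0 * 1 + ∑ s' ∈ Finset.univ.erase s0, M.prob t a s' := by
          apply add_le_add le_rfl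
          apply Finset.sum_le_sum
          intro s' _
          calc M.prob t a s' * M.safeVal Bad s' ≤ M.prob t a s' * 1 :=
                mul_le_mul' le_rfl (safeVal_le_one M Bad s')
            _ = M.prob t a s' := mul_one _
      _ = ∑ s' : S, M.prob t a s' := by
          rw [mul_one]
          exact Finset.add_sum_erase _ _ (Finset.mem_univ s0)
      _ = 1 := sum_prob_eq_one M hleg
  exact absurd hVal.symm hstrict.ne

lemma opt_safeN_one (M : MDP S A) {Bad : Set S} (hBad : M.SinkSet Bad) :
    ∀ (n : ℕ) (t : S), t ∈ M.GoodSet Bad → ∀ τ : Strat S A, LocStrat M τ t →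
      LocOpt M Bad τ t → M.safeN τ t Bad n = 1 := by
  intro n
  induction n with
  | zero =>
    intro t ht τ _ _
    rw [safeN_zero, if_neg (good_not_bad M ht)]
  | succ n ih =>
    intro t ht τ hτ hτo
    have htB : t ∉ Bad := good_not_bad M ht
    rw [safeN_succ M Bad τ htB n]
    have hsum : ∑ a, τ t [] a = 1 := (hτ [] (isPathFrom_nil M t)).1
    have hterm : ∀ a : A, (∑ s' : S, τ t [] a *
          (M.prob t a s' * M.safeN (shiftStrat τ t [(a, s')]) s' Bad n)) = τ t [] a := by
      intro a
      by_cases ha : 0 < τ t [] a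
      · have hopt : M.OptS Bad t a := by
          have := hτo [] (isPathFrom_nil M t) a ha
          simpa [lastState] using this
        obtain ⟨hleg, hVal⟩ := hopt
        have hvt : M.safeVal Bad t = 1 := good_val_one M hBad ht
        rw [hvt] at hVal
        rw [← Finset.mul_sum]
        have hin : ∑ s' : S, M.prob t a s' * M.safeN (shiftStrat τ t [(a, s')]) s' Bad n
            = 1 := by
          have hterm' : ∀ s' : S,
              M.prob t a s' * M.safeN (shiftStrat τ t [(a, s')]) s' Bad n
              = M.prob t a s' := by
            intro s'
            by_cases hp : 0 < M.prob t a s'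
            · have hval' : M.safeVal Bad s' = 1 := succ_val_one M Bad hleg hVal hp
              have hgood' : s' ∈ M.GoodSet Bad := good_of_val_eq_one M Bad hval'
              have hshS : LocStrat M (shiftStrat τ t [(a, s')]) s' := by
                have := hτ.shift (pre := [(a, s')])
                  ((isPathFrom_cons M t a s' []).mpr ⟨hleg, hp, trivial⟩)
                simpa [lastState] using this
              have hshO : LocOpt M Bad (shiftStrat τ t [(a, s')]) s' := by
                have := hτo.shift (pre := [(a, s')])
                  ((isPathFrom_cons M t a s' []).mpr ⟨hleg, hp, trivial⟩)
                simpa [lastState] using this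
              rw [ih s' hgood' _ hshS hshO, mul_one]
            · have h0 : M.prob t a s' = 0 := by simpa using hp
              simp [h0]
          rw [Finset.sum_congr rfl (fun s' _ => hterm' s')]
          exact sum_prob_eq_one M hleg
        rw [hin, mul_one]
      · have h0 : τ t [] a = 0 := by simpa using ha
        simp [h0]
    rw [Finset.sum_congr rfl (fun a _ => hterm a), hsum]

end Aux11




/-- for `σ ∈ Σ^Opt` and every finite path `ρ` with `P_{σ,s₀}(ρ) > 0`,
`Pr_{σ_ρ, last(ρ)}(□¬Bad) = 1` iff `last(ρ) ∈ Good`. -/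
theorem stmt11 {S : Type u} {A : Type v} [Fintype S] [Fintype A] [Nonempty S] [Nonempty A]
    (M : MDP S A) (Bad : Set S) (hBad : M.SinkSet Bad)
    (σ : Strat S A) (hσ : M.IsStrategy σ) (hopt : M.SigmaOptS Bad σ)
    (ρ : FPath S A) (hρ : M.IsPath ρ) (hpos : 0 < M.cylProb σ ρ.start ρ) :
    M.prSafe (shiftStrat σ ρ.start ρ.steps) ρ.last Bad = 1 ↔ ρ.last ∈ M.GoodSet Bad := by
  have hLocS : LocStrat M (shiftStrat σ ρ.start ρ.steps) ρ.last :=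
    (locStrat_of_isStrategy hσ ρ.start).shift hρ
  have hLocO : LocOpt M Bad (shiftStrat σ ρ.start ρ.steps) ρ.last :=
    (locOpt_of_sigmaOpt hopt ρ.start).shift hρ
  constructor
  · intro h1
    by_contra hns
    have hmem : ρ.last ∈ ⋃ i, M.UPre Bad i := by
      by_contra h2
      exact hns h2
    obtain ⟨i, hi⟩ := Set.mem_iUnion.mp hmem
    obtain ⟨δ, hδ0, hδ1, hδ⟩ := exists_delta M
    have hb := upre_bound M Bad hδ1 hδ i ρ.last _ hi hLocS
    have hgei : (1 : ℝ≥0∞) ≤ M.safeN (shiftStrat σ ρ.start ρ.steps) ρ.last Bad i := by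
      rw [← h1]
      exact iInf_le _ i
    have hle : (1 : ℝ≥0∞) + δ ^ i ≤ 1 + 0 := by
      rw [add_zero]
      exact le_trans (add_le_add hgei le_rfl) hb
    have hz := (ENNReal.add_le_add_iff_left ENNReal.one_ne_top).mp hle
    exact (ENNReal.pow_pos hδ0 i).ne' (le_antisymm hz zero_le)
  · intro h2
    have hn : ∀ n, M.safeN (shiftStrat σ ρ.start ρ.steps) ρ.last Bad n = 1 :=
      fun n => opt_safeN_one M hBad n ρ.last h2 _ hLocS hLocO
    simp [MDP.prSafe, hn]
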